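/- Let Y₁, …, Y_N be closed subspaces of a Hilbert space X with orthogonal projections P₁, …, P_N, let Y = Y₁ ∩ ⋯ ∩ Y_N with orthogonal projection P, and set T = P_N ⋯ P₁. Then Ker(I − T) = Y. -/

import Mathlib

open Filter Topology

private lemma prod_fix' {X : Type*} [NormedAddCommGroup X] [InnerProductSpace ℂ X]
    (L : List (X →L[ℂ] X)) (x : X) (h : ∀ Q ∈ L, Q x = x) : L.prod x = x := by
  induction L with
  | nil => simp
  | cons Q L ih =>
    simp only [List.prod_cons, ContinuousLinearMap.mul_apply]
    rw [ih fun Q hQ => h Q (List.mem_cons_of_mem _ hQ), h Q (List.mem_cons_self)]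

private lemma prod_norm_le' {X : Type*} [NormedAddCommGroup X] [InnerProductSpace ℂ X]
    (L : List (X →L[ℂ] X)) (h : ∀ Q ∈ L, ∀ z : X, ‖Q z‖ ≤ ‖z‖) (x : X) :
    ‖L.prod x‖ ≤ ‖x‖ := by
  induction L with
  | nil => simp
  | cons Q L ih =>
    simp only [List.prod_cons, ContinuousLinearMap.mul_apply]
    exact (h Q (List.mem_cons_self) _).trans
      (ih fun Q hQ => h Q (List.mem_cons_of_mem _ hQ))

private lemma key' {X : Type*} [NormedAddCommGroup X] [InnerProductSpace ℂ X]
    (L : List (X →L[ℂ] X)) (h1 : ∀ Q ∈ L, ∀ z : X, ‖Q z‖ ≤ ‖z‖)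
    (h2 : ∀ Q ∈ L, ∀ z : X, ‖Q z‖ = ‖z‖ → Q z = z) (x : X) (hx : L.prod x = x) :
    ∀ Q ∈ L, Q x = x := by
  induction L with
  | nil => simp
  | cons Q L ih =>
    have hx' : Q (L.prod x) = x := by
      simpa [List.prod_cons, ContinuousLinearMap.mul_apply] using hx
    have hy : ‖L.prod x‖ ≤ ‖x‖ :=
      prod_norm_le' L (fun Q hQ => h1 Q (List.mem_cons_of_mem _ hQ)) x
    have hq : ‖x‖ ≤ ‖L.prod x‖ := by
      calc ‖x‖ = ‖Q (L.prod x)‖ := by rw [hx']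
      _ ≤ ‖L.prod x‖ := h1 Q (List.mem_cons_self) _
    have heq : ‖L.prod x‖ = ‖x‖ := le_antisymm hy hq
    have hQfix : Q (L.prod x) = L.prod x :=
      h2 Q (List.mem_cons_self) _ (by rw [hx', heq])
    have hfx : L.prod x = x := by rw [← hQfix, hx']
    intro R hR
    rcases List.mem_cons.mp hR with rfl | hR
    · rw [← hfx, hQfix, hfx]
    · exact ih (fun Q hQ => h1 Q (List.mem_cons_of_mem _ hQ))
        (fun Q hQ => h2 Q (List.mem_cons_of_mem _ hQ)) hfx R hR

/-- For the product `T = P_N ⋯ P_1` of orthogonal projections onto closed subspaces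
`Y_1, …, Y_N` of a Hilbert space, `Ker(I - T) = Y_1 ∩ ⋯ ∩ Y_N`. -/
theorem stmt12 {X : Type*} [NormedAddCommGroup X] [InnerProductSpace ℂ X] [CompleteSpace X]
    (N : ℕ) (Y : Fin N → Submodule ℂ X) (hYc : ∀ k, IsClosed (Y k : Set X))
    (P : Fin N → (X →L[ℂ] X))
    (hmem : ∀ k x, P k x ∈ Y k)
    (hfix : ∀ k, ∀ y ∈ Y k, P k y = y)
    (horth : ∀ k x, x - P k x ∈ (Y k)ᗮ) :
    LinearMap.ker (((1 : X →L[ℂ] X) - (List.ofFn P).reverse.prod : X →L[ℂ] X) : X →ₗ[ℂ] X) = ⨅ k, Y k := by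
  -- Pythagoras for each projection
  have pyth : ∀ k (z : X), ‖P k z‖ ^ 2 + ‖z - P k z‖ ^ 2 = ‖z‖ ^ 2 := by
    intro k z
    have horth0 : (inner ℂ (P k z) (z - P k z) : ℂ) = 0 :=
      Submodule.inner_right_of_mem_orthogonal (hmem k z) (horth k z)
    have := norm_add_sq (𝕜 := ℂ) (P k z) (z - P k z)
    simp only [horth0, map_zero, mul_zero, add_zero] at this
    simpa [add_sub_cancel] using this.symm
  have hle : ∀ k (z : X), ‖P k z‖ ≤ ‖z‖ := by
    intro k z
    nlinarith [pyth k z, norm_nonneg (P k z), norm_nonneg z, norm_nonneg (z - P k z)]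
  have heqfix : ∀ k (z : X), ‖P k z‖ = ‖z‖ → P k z = z := by
    intro k z hz
    have hp := pyth k z
    rw [hz] at hp
    have h0 : ‖z - P k z‖ ^ 2 = 0 := by linarith
    have : z - P k z = 0 := by
      have := sq_eq_zero_iff.mp h0
      exact norm_eq_zero.mp this
    rw [eq_comm, ← sub_eq_zero]
    simpa using this
  have hmemL : ∀ Q ∈ (List.ofFn P).reverse, ∃ k, P k = Q := by
    intro Q hQ
    rw [List.mem_reverse, List.mem_ofFn] at hQ
    exact hQ
  ext x
  simp only [LinearMap.mem_ker, ContinuousLinearMap.coe_coe, ContinuousLinearMap.coe_sub', Pi.sub_apply,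
    ContinuousLinearMap.one_apply, sub_eq_zero, Submodule.mem_iInf]
  constructor
  · intro hx k
    have hall := key' _ (fun Q hQ => by obtain ⟨k, rfl⟩ := hmemL Q hQ; exact hle k)
      (fun Q hQ => by obtain ⟨k, rfl⟩ := hmemL Q hQ; exact heqfix k) x hx.symm
    have : P k x = x := hall (P k) (by rw [List.mem_reverse, List.mem_ofFn]; exact ⟨k, rfl⟩)
    rw [← this]; exact hmem k x
  · intro hx
    exact (prod_fix' _ x fun Q hQ => by
      obtain ⟨k, rfl⟩ := hmemL Q hQ; exact hfix k x (hx k)).symm
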